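/- Let f₁, ..., f_m : ℝⁿ → ℝ be measurable functions such that each f_i is periodic with some nonzero invariant vector v_i (f_i(x + v_i) = f_i(x) for all x). If the sum f = f₁ + ⋯ + f_m is Lebesgue integrable on ℝⁿ, then f = 0 almost everywhere. -/

import Mathlib

open MeasureTheory Filter Set

lemma key_ae_periodic_zero (n : ℕ) (g : (Fin n → ℝ) → ℝ) (hg : Measurable g)
    (hi : Integrable g volume) (v : Fin n → ℝ) (hv : v ≠ 0)
    (hp : (fun x => g (x + v)) =ᵐ[volume] g) : g =ᵐ[volume] 0 := by
  obtain ⟨j, hj⟩ := Function.ne_iff.mp hv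
  set c : ℝ := ∑ i, v i * v i with hc
  have hcpos : 0 < c := by
    have h1 : v j * v j ≤ c := Finset.single_le_sum (fun i _ => mul_self_nonneg (v i))
      (Finset.mem_univ j)
    exact lt_of_lt_of_le (mul_self_pos.mpr (by simpa using hj)) h1
  set L : (Fin n → ℝ) → ℝ := fun x => ∑ i, x i * v i with hL
  have hLmeas : Measurable L :=
    Finset.measurable_sum _ (fun i _ => (measurable_pi_apply i).mul_const _)
  have hLadd : ∀ (k : ℤ) (x : Fin n → ℝ), L (x + (k : ℝ) • v) = L x + (k : ℝ) * c := by
    intro k x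
    simp only [hL, hc, Pi.add_apply, Pi.smul_apply, smul_eq_mul, add_mul,
      Finset.sum_add_distrib, Finset.mul_sum, mul_assoc]
  set A : ℤ → Set (Fin n → ℝ) := fun k => L ⁻¹' (Set.Ico ((k : ℝ) * c) (((k : ℝ) + 1) * c))
    with hA
  have hAmeas : ∀ k, MeasurableSet (A k) := fun k => hLmeas measurableSet_Ico
  have hmem : ∀ (k : ℤ) (x : Fin n → ℝ), x ∈ A k ↔ ⌊L x / c⌋ = k := by
    intro k x
    simp only [hA, Set.mem_preimage, Set.mem_Ico]
    rw [Int.floor_eq_iff]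
    constructor
    · rintro ⟨h1, h2⟩
      exact ⟨(le_div_iff₀ hcpos).mpr (by linarith), (div_lt_iff₀ hcpos).mpr (by linarith)⟩
    · rintro ⟨h1, h2⟩
      have h1' := (le_div_iff₀ hcpos).mp h1
      have h2' := (div_lt_iff₀ hcpos).mp h2
      exact ⟨by linarith, by linarith⟩
  have hdisj : Pairwise (Function.onFun Disjoint A) := by
    intro k l hkl
    simp only [Function.onFun]
    rw [Set.disjoint_left]
    intro x hxk hxl
    exact hkl (((hmem k x).mp hxk).symm.trans ((hmem l x).mp hxl))
  have hcover : (⋃ k, A k) = Set.univ := by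
    ext x
    simp only [Set.mem_iUnion, Set.mem_univ, iff_true]
    exact ⟨⌊L x / c⌋, (hmem _ x).mpr rfl⟩
  -- a.e. periodicity with translation k • v
  have hpk : ∀ k : ℤ, (fun x => g (x + (k : ℝ) • v)) =ᵐ[volume] g := by
    have hstep : ∀ w : Fin n → ℝ,
        (fun x => g (x + w + v)) =ᵐ[volume] (fun x => g (x + w)) := by
      intro w
      have := hp.comp_tendsto
        ((measurePreserving_add_right (volume : Measure (Fin n → ℝ)) w)
          |>.quasiMeasurePreserving.tendsto_ae)
      exact this
    intro k
    induction k using Int.induction_on with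
    | zero => simp
    | succ k ih =>
        have h1 := (hstep (((k:ℤ):ℝ) • v)).trans ih
        have e : (fun x : Fin n → ℝ => g (x + (((k:ℤ)+1 : ℤ) : ℝ) • v))
            = (fun x => g (x + ((k:ℤ):ℝ) • v + v)) := by
          funext x; congr 1; push_cast; module
        show (fun x => g (x + (((k:ℤ)+1 : ℤ) : ℝ) • v)) =ᵐ[volume] g
        rw [e]; exact h1
    | pred k ih =>
        have h1 := hstep (((-(k:ℤ)-1 : ℤ) : ℝ) • v)
        have e : (fun x : Fin n → ℝ => g (x + ((-(k:ℤ)-1 : ℤ) : ℝ) • v + v))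
            = (fun x => g (x + ((-(k:ℤ) : ℤ) : ℝ) • v)) := by
          funext x; congr 1; push_cast; module
        rw [e] at h1
        show (fun x => g (x + ((-(k:ℤ)-1 : ℤ) : ℝ) • v)) =ᵐ[volume] g
        exact h1.symm.trans ih
  -- lintegral decomposition
  set F : (Fin n → ℝ) → ENNReal := fun x => ‖g x‖₊ with hF
  have hFmeas : Measurable F := hg.nnnorm.coe_nnreal_ennreal
  have hdecomp : ∫⁻ x, F x = ∑' k : ℤ, ∫⁻ x in A k, F x := by
    rw [← lintegral_iUnion hAmeas hdisj F, hcover, Measure.restrict_univ]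
  have htrans : ∀ k : ℤ, ∫⁻ x in A k, F x = ∫⁻ x in A 0, F x := by
    intro k
    have h1 : ∫⁻ x in A k, F x = ∫⁻ x, (A k).indicator F x := (lintegral_indicator (hAmeas k) F).symm
    have h2 : ∫⁻ x, (A k).indicator F x = ∫⁻ x, (A k).indicator F (x + (k : ℝ) • v) :=
      (lintegral_add_right_eq_self ((A k).indicator F) ((k : ℝ) • v)).symm
    have h3 : ∀ x, (A k).indicator F (x + (k : ℝ) • v)
        = (A 0).indicator (fun y => F (y + (k : ℝ) • v)) x := by
      intro x
      have hmem' : x + (k : ℝ) • v ∈ A k ↔ x ∈ A 0 := by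
        simp only [hA, Set.mem_preimage, Set.mem_Ico, hLadd]
        constructor <;> rintro ⟨u1, u2⟩ <;> constructor <;> push_cast at * <;> nlinarith
      by_cases hx : x ∈ A 0
      · rw [Set.indicator_of_mem (hmem'.mpr hx), Set.indicator_of_mem hx]
      · rw [Set.indicator_of_notMem (fun h => hx (hmem'.mp h)), Set.indicator_of_notMem hx]
    have h4 : (fun x => (A 0).indicator (fun y => F (y + (k : ℝ) • v)) x)
        =ᵐ[volume] (fun x => (A 0).indicator F x) := by
      filter_upwards [hpk k] with x hx
      by_cases h : x ∈ A 0
      · simp only [Set.indicator_of_mem h, hF, hx]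
      · simp only [Set.indicator_of_notMem h]
    calc ∫⁻ x in A k, F x = ∫⁻ x, (A k).indicator F (x + (k : ℝ) • v) := by rw [h1, h2]
      _ = ∫⁻ x, (A 0).indicator (fun y => F (y + (k : ℝ) • v)) x := by simp only [h3]
      _ = ∫⁻ x, (A 0).indicator F x := lintegral_congr_ae h4
      _ = ∫⁻ x in A 0, F x := lintegral_indicator (hAmeas 0) F
  have hfin : ∫⁻ x, F x ≠ ⊤ := hi.2.ne
  have ht0 : ∫⁻ x in A 0, F x = 0 := by
    by_contra h
    have : ∑' k : ℤ, ∫⁻ x in A k, F x = ⊤ := by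
      rw [tsum_congr htrans]
      exact ENNReal.tsum_const_eq_top_of_ne_zero h
    exact hfin (hdecomp.trans this)
  have hall : ∫⁻ x, F x = 0 := by
    rw [hdecomp, tsum_congr htrans, ht0]; simp
  have := (lintegral_eq_zero_iff hFmeas).mp hall
  filter_upwards [this] with x hx
  simpa [hF] using hx
lemma sum_periodic_zero (n : ℕ) : ∀ (m : ℕ) (f : Fin m → (Fin n → ℝ) → ℝ)
    (v : Fin m → Fin n → ℝ), (∀ i, Measurable (f i)) → (∀ i, v i ≠ 0) →
    (∀ i x, f i (x + v i) = f i x) →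
    Integrable (fun x => ∑ i, f i x) (volume : Measure (Fin n → ℝ)) →
    (fun x => ∑ i, f i x) =ᵐ[(volume : Measure (Fin n → ℝ))] 0 := by
  intro m
  induction m with
  | zero => intro f v _ _ _ _; simp; rfl
  | succ m ih =>
      intro f v hmeas hv hper hint
      set F : (Fin n → ℝ) → ℝ := fun x => ∑ i, f i x with hFdef
      set G : Fin m → (Fin n → ℝ) → ℝ :=
        fun i x => f i.succ (x + v 0) - f i.succ x with hGdef
      have hGmeas : ∀ i, Measurable (G i) := fun i =>
        ((hmeas i.succ).comp (measurable_id.add_const (v 0))).sub (hmeas i.succ)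
      have hGper : ∀ i x, G i (x + v i.succ) = G i x := by
        intro i x
        simp only [hGdef]
        rw [add_right_comm x (v i.succ) (v 0), hper i.succ, hper i.succ]
      have hGsum : ∀ x, ∑ i, G i x = F (x + v 0) - F x := by
        intro x
        simp only [hGdef, hFdef, Finset.sum_sub_distrib]
        rw [Fin.sum_univ_succ (fun i => f i (x + v 0)), Fin.sum_univ_succ (fun i => f i x),
          hper 0]
        ring
      have hGint : Integrable (fun x => ∑ i, G i x) (volume : Measure (Fin n → ℝ)) := by
        have : (fun x => ∑ i, G i x) = fun x => F (x + v 0) - F x := funext hGsum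
        rw [this]
        exact (hint.comp_add_right (v 0)).sub hint
      have hG0 := ih G (fun i => v i.succ) hGmeas (fun i => hv i.succ)
        hGper hGint
      have hFper : (fun x => F (x + v 0)) =ᵐ[(volume : Measure (Fin n → ℝ))] F := by
        filter_upwards [hG0] with x hx
        have := hGsum x
        rw [hx] at this
        simp only [Pi.zero_apply] at this
        linarith [this]
      have hFmeas : Measurable F := Finset.measurable_sum _ (fun i _ => hmeas i)
      exact key_ae_periodic_zero n F hFmeas hint (v 0) (hv 0) hFper

theorem stmt_2 (n m : ℕ) (f : Fin m → (Fin n → ℝ) → ℝ) (v : Fin m → Fin n → ℝ)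
    (hmeas : ∀ i, Measurable (f i)) (hv : ∀ i, v i ≠ 0)
    (hper : ∀ i x, f i (x + v i) = f i x)
    (hint : Integrable (fun x => ∑ i, f i x) (volume : Measure (Fin n → ℝ))) :
    (fun x => ∑ i, f i x) =ᵐ[(volume : Measure (Fin n → ℝ))] 0 :=
  sum_periodic_zero n m f v hmeas hv hper hint
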